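/- For all integers n and r with n ≥ r ≥ 2, f(n, r) < 6·(n−1)^{n−1}. -/

import Mathlib

/-- `f(n, r) = ∑ i₁^{i₁} ⋯ i_r^{i_r}`, the sum running over ordered `r`-tuples of
positive integers with `i₁ + ⋯ + i_r = n`. -/
def fnr (n r : ℕ) : ℕ :=
  ∑ i ∈ (Finset.Nat.antidiagonalTuple r n).filter (fun i => ∀ j, 0 < i j),
    ∏ j, (i j) ^ (i j)

lemma fnr_of_lt {n r : ℕ} (h : n < r) : fnr n r = 0 := by
  rw [fnr, Finset.sum_eq_zero_iff]
  intro i hi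
  simp only [Finset.mem_filter, Finset.Nat.mem_antidiagonalTuple] at hi
  exfalso
  have : r ≤ ∑ j : Fin r, i j := by
    calc r = ∑ _j : Fin r, 1 := by simp
    _ ≤ ∑ j : Fin r, i j := Finset.sum_le_sum fun j _ => hi.2 j
  omega

lemma fnr_one (n : ℕ) (hn : 1 ≤ n) : fnr n 1 = n ^ n := by
  rw [fnr, Finset.Nat.antidiagonalTuple_one]
  rw [Finset.filter_singleton]
  simp only [show (∀ j : Fin 1, 0 < (![n] : Fin 1 → ℕ) j) = True by
    simp [Matrix.cons_val_fin_one]; omega, if_true]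
  simp

lemma fnr_succ (n r : ℕ) :
    fnr n (r + 1) = ∑ k ∈ Finset.Ico 1 (n + 1), k ^ k * fnr (n - k) r := by
  have : ∀ k ∈ Finset.Ico 1 (n+1), k ^ k * fnr (n-k) r
      = ∑ i ∈ (Finset.Nat.antidiagonalTuple r (n-k)).filter (fun i => ∀ j, 0 < i j),
          k ^ k * ∏ j, (i j) ^ (i j) := by
    intro k _; rw [fnr, Finset.mul_sum]
  rw [Finset.sum_congr rfl this]
  rw [← Finset.sum_sigma (Finset.Ico 1 (n+1))
    (fun k => (Finset.Nat.antidiagonalTuple r (n-k)).filter (fun i => ∀ j, 0 < i j))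
    (fun z => z.1 ^ z.1 * ∏ j, (z.2 j) ^ (z.2 j))]
  rw [fnr]
  apply Finset.sum_nbij' (i := fun i => (⟨i 0, Fin.tail i⟩ : Σ _k : ℕ, Fin r → ℕ))
    (j := fun x => Fin.cons x.1 x.2)
  · intro i hi
    simp only [Finset.mem_sigma, Finset.mem_Ico, Finset.mem_filter,
      Finset.Nat.mem_antidiagonalTuple] at hi ⊢
    obtain ⟨hsum, hpos⟩ := hi
    have h0 : 0 < i 0 := hpos 0
    have hle : i 0 ≤ n := by
      rw [← hsum, Fin.sum_univ_succ]; omega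
    refine ⟨⟨h0, by omega⟩, ?_, fun j => hpos j.succ⟩
    have := hsum
    rw [Fin.sum_univ_succ] at this
    simp only [Fin.tail]
    omega
  · rintro ⟨k, i⟩ hx
    simp only [Finset.mem_sigma, Finset.mem_Ico, Finset.mem_filter,
      Finset.Nat.mem_antidiagonalTuple] at hx ⊢
    obtain ⟨⟨hk1, hk2⟩, hsum, hpos⟩ := hx
    constructor
    · rw [Fin.sum_cons, hsum]; omega
    · intro j
      refine Fin.cases ?_ ?_ j
      · simpa using (show 0 < k by omega)
      · intro j; simpa using hpos j
  · intro i _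
    exact Fin.cons_self_tail i
  · rintro ⟨k, i⟩ _
    simp [Fin.cons_zero, Fin.tail_cons]
  · intro i _
    rw [Fin.prod_univ_succ]
    rfl

-- upper Bernoulli: (v+1)^(x+1) ≤ v^(x+1) + (x+1)*(v+1)^x
lemma pow_ub (v : ℕ) : ∀ x : ℕ, (v+1)^(x+1) ≤ v^(x+1) + (x+1)*(v+1)^x := by
  intro x
  induction x with
  | zero => simp
  | succ x ih =>
    have h : (v+1)^(x+2) = (v+1)^(x+1) * (v+1) := by ring
    calc (v+1)^(x+2) = (v+1)^(x+1) * (v+1) := h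
    _ ≤ (v^(x+1) + (x+1)*(v+1)^x) * (v+1) := Nat.mul_le_mul_right _ ih
    _ = v^(x+1)*(v+1) + (x+1)*(v+1)^(x+1) := by ring
    _ = v^(x+2) + v^(x+1) + (x+1)*(v+1)^(x+1) := by ring
    _ ≤ v^(x+2) + (v+1)^(x+1) + (x+1)*(v+1)^(x+1) := by
        have : v^(x+1) ≤ (v+1)^(x+1) := Nat.pow_le_pow_left (by omega) _
        omega
    _ = v^(x+2) + (x+2)*(v+1)^(x+1) := by ring

-- lower Bernoulli: v^(x+1) + (x+1)*v^x ≤ (v+1)^(x+1)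
lemma pow_lb (v : ℕ) : ∀ x : ℕ, v^(x+1) + (x+1)*v^x ≤ (v+1)^(x+1) := by
  intro x
  induction x with
  | zero => simp
  | succ x ih =>
    calc v^(x+2) + (x+2)*v^(x+1) ≤ v^(x+2) + (x+2)*v^(x+1) + (x+1)*v^x := Nat.le_add_right _ _
    _ = (v^(x+1) + (x+1)*v^x) * (v+1) := by ring
    _ ≤ (v+1)^(x+1) * (v+1) := Nat.mul_le_mul_right _ ih
    _ = (v+1)^(x+2) := by ring

-- g monotone step: (x+1)^(x+1)*(x+1)^(x+1) ≤ (x+2)^(x+2) * x^x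
lemma g_step (x : ℕ) : (x+1)^(x+1)*(x+1)^(x+1) ≤ (x+2)^(x+2) * x^x := by
  rcases Nat.eq_zero_or_pos x with rfl | hx
  · decide
  obtain ⟨y, rfl⟩ : ∃ y, x = y + 1 := ⟨x - 1, by omega⟩
  set x := y + 1 with hxdef
  -- u = (x+1)^2, v = x*(x+2) = u - 1
  have key1 : ((x+1)^2)^x ≤ (x*(x+2))^x + x * ((x+1)^2)^y := by
    have := pow_ub (x*(x+2)) y
    have e : x*(x+2) + 1 = (x+1)^2 := by ring
    rw [e] at this
    simpa [hxdef] using this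
  have key2 : (x*x+x+1) * ((x+1)^2)^y ≤ (x*(x+2))^x := by
    have := pow_ub (x*(x+2)) y
    have e : x*(x+2) + 1 = (x+1)^2 := by ring
    rw [e] at this
    have e2 : ((x+1)^2)^(y+1) = (x+1)^2 * ((x+1)^2)^y := by ring
    rw [hxdef] at *
    nlinarith [this]
  have lhs_eq : (x+1)^(x+1)*(x+1)^(x+1) = (x+1)^2 * ((x+1)^2)^x := by
    rw [← pow_add, ← pow_mul]; ring_nf
  have rhs_eq : (x+2)^(x+2) * x^x = (x+2)^2 * (x*(x+2))^x := by
    have e : (x+2)^(x+2) = (x+2)^2 * (x+2)^x := by rw [← pow_add]; ring_nf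
    rw [e, mul_pow]; ring
  rw [lhs_eq, rhs_eq]
  calc (x+1)^2 * ((x+1)^2)^x ≤ (x+1)^2 * ((x*(x+2))^x + x * ((x+1)^2)^y) :=
        Nat.mul_le_mul_left _ key1
  _ = (x+1)^2 * (x*(x+2))^x + (x+1)^2 * x * ((x+1)^2)^y := by ring
  _ ≤ (x+2)^2 * (x*(x+2))^x := by nlinarith [key2, Nat.zero_le (((x+1)^2)^y)]

-- g monotone: x ≤ y → (x+1)^(x+1) * y^y ≤ x^x * (y+1)^(y+1)
lemma g_mono {x y : ℕ} (h : x ≤ y) : (x+1)^(x+1) * y^y ≤ x^x * (y+1)^(y+1) := by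
  induction y, h using Nat.le_induction with
  | base =>
    nlinarith [g_step x, pow_pos (show 0 < x+1 by omega) x, pow_pos (show 0 < x+1 by omega) (x+1)]
  | succ y hy ih =>
    have hypos : 0 < y^y := by
      rcases Nat.eq_zero_or_pos y with rfl | h; · decide
      exact pow_pos h y
    have step := g_step y
    -- (x+1)^(x+1) * (y+1)^(y+1) * y^y ≤ x^x * (y+1)^(y+1) * (y+1)^(y+1) ≤ x^x * (y+2)^(y+2) * y^y
    have h1 : (x+1)^(x+1) * (y+1)^(y+1) * y^y ≤ x^x * ((y+1)^(y+1) * (y+1)^(y+1)) := by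
      calc (x+1)^(x+1) * (y+1)^(y+1) * y^y = ((x+1)^(x+1) * y^y) * (y+1)^(y+1) := by ring
      _ ≤ (x^x * (y+1)^(y+1)) * (y+1)^(y+1) := Nat.mul_le_mul_right _ ih
      _ = x^x * ((y+1)^(y+1) * (y+1)^(y+1)) := by ring
    have h2 : x^x * ((y+1)^(y+1) * (y+1)^(y+1)) ≤ x^x * ((y+2)^(y+2) * y^y) :=
      Nat.mul_le_mul_left _ step
    have := le_trans h1 h2
    have h3 : (x+1)^(x+1) * (y+1)^(y+1) * y^y ≤ x^x * (y+2)^(y+2) * y^y := by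
      calc (x+1)^(x+1) * (y+1)^(y+1) * y^y ≤ x^x * ((y+2)^(y+2) * y^y) := this
      _ = x^x * (y+2)^(y+2) * y^y := by ring
    exact Nat.le_of_mul_le_mul_right h3 hypos

-- chain: (j+t)^(j+t) * b^b ≤ j^j * (b+t)^(b+t) when j + t ≤ b + 1
lemma chain (j : ℕ) : ∀ t b : ℕ, j + t ≤ b + 1 →
    (j+t)^(j+t) * b^b ≤ j^j * (b+t)^(b+t) := by
  intro t
  induction t with
  | zero => intro b _; simp
  | succ t ih =>
    intro b hb
    have h1 : (j+(t+1))^(j+(t+1)) * b^b ≤ (j+t)^(j+t) * (b+1)^(b+1) := by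
      have := g_mono (x := j+t) (y := b) (by omega)
      calc (j+(t+1))^(j+(t+1)) * b^b = ((j+t)+1)^((j+t)+1) * b^b := by ring_nf
      _ ≤ (j+t)^(j+t) * (b+1)^(b+1) := this
    calc (j+(t+1))^(j+(t+1)) * b^b ≤ (j+t)^(j+t) * (b+1)^(b+1) := h1
    _ ≤ j^j * ((b+1)+t)^((b+1)+t) := ih (b+1) (by omega)
    _ = j^j * (b+(t+1))^(b+(t+1)) := by ring_nf

-- lemma A: 2*(m+1)*m^m ≤ (m+1)^(m+1) for m ≥ 1
lemma lemA {m : ℕ} (hm : 1 ≤ m) : 2*(m+1)*m^m ≤ (m+1)^(m+1) := by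
  obtain ⟨y, rfl⟩ : ∃ y, m = y + 1 := ⟨m - 1, by omega⟩
  have h := pow_lb (y+1) y
  have e : (y+1)^(y+1) + (y+1)*(y+1)^y = 2*(y+1)^(y+1) := by ring
  rw [e] at h
  calc 2*((y+1)+1)*(y+1)^(y+1) = ((y+1)+1) * (2*(y+1)^(y+1)) := by ring
  _ ≤ ((y+1)+1) * ((y+1)+1)^(y+1) := Nat.mul_le_mul_left _ h
  _ = ((y+1)+1)^((y+1)+1) := by rw [← pow_succ']


lemma Tb (n : ℕ) (hn : 2 ≤ n) :
    (∑ k ∈ Finset.Ico 1 n, k^k*(n-k)^(n-k)) ≤ 3*(n-1)^(n-1) := by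
  rcases lt_or_ge n 9 with h9 | h9
  · interval_cases n <;> decide
  obtain ⟨m, rfl⟩ : ∃ m, n = m + 9 := ⟨n - 9, by omega⟩
  rw [← Finset.sum_Ico_consecutive (fun k => k^k*(m+9-k)^(m+9-k))
      (show 1 ≤ 3 by omega) (show 3 ≤ m+9 by omega)]
  rw [← Finset.sum_Ico_consecutive (fun k => k^k*(m+9-k)^(m+9-k))
      (show 3 ≤ m+7 by omega) (show m+7 ≤ m+9 by omega)]
  have e1 : (∑ k ∈ Finset.Ico 1 3, k^k*(m+9-k)^(m+9-k))
      = (m+8)^(m+8) + 4*(m+7)^(m+7) := by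
    have : Finset.Ico 1 3 = {1, 2} := by decide
    rw [this, Finset.sum_insert (by decide), Finset.sum_singleton,
      show m+9-1 = m+8 by omega, show m+9-2 = m+7 by omega]
    norm_num
  have e2 : (∑ k ∈ Finset.Ico (m+7) (m+9), k^k*(m+9-k)^(m+9-k))
      = 4*(m+7)^(m+7) + (m+8)^(m+8) := by
    rw [show m+9 = (m+8)+1 from rfl, Finset.sum_Ico_succ_top (by omega)]
    rw [show m+8 = (m+7)+1 from rfl, Finset.sum_Ico_succ_top (by omega)]
    rw [Finset.Ico_self, Finset.sum_empty]
    rw [show m+9-(m+7) = 2 by omega, show m+9-(m+7+1) = 1 by omega]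
    ring_nf
  have emid : (∑ k ∈ Finset.Ico 3 (m+7), k^k*(m+9-k)^(m+9-k))
      ≤ (m+4) * (27*(m+6)^(m+6)) := by
    have hcard : (Finset.Ico 3 (m+7)).card = m+4 := by
      rw [Nat.card_Ico]; omega
    calc (∑ k ∈ Finset.Ico 3 (m+7), k^k*(m+9-k)^(m+9-k))
        ≤ (Finset.Ico 3 (m+7)).card • (27*(m+6)^(m+6)) := by
          apply Finset.sum_le_card_nsmul
          intro k hk
          simp only [Finset.mem_Ico] at hk
          set b := m + 9 - k with hb
          have hkb : k + b = m + 9 := by omega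
          rcases le_or_gt k b with hle | hlt
          · have := chain 3 (k-3) b (by omega)
            rw [show 3+(k-3) = k by omega, show b+(k-3) = m+6 by omega] at this
            simpa using this
          · have := chain 3 (b-3) k (by omega)
            rw [show 3+(b-3) = b by omega, show k+(b-3) = m+6 by omega] at this
            calc k^k * b^b = b^b * k^k := by ring
            _ ≤ 3^3 * (m+6)^(m+6) := this
            _ = 27*(m+6)^(m+6) := by norm_num
    _ = (m+4) * (27*(m+6)^(m+6)) := by rw [hcard]; simp
  rw [e1, e2]
  rw [show m+9-1 = m+8 by omega]
  have h1 : 2*(m+8)*(m+7)^(m+7) ≤ (m+8)^(m+8) := lemA (by omega)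
  have h2 : 2*(m+7)*(m+6)^(m+6) ≤ (m+7)^(m+7) := lemA (by omega)
  have h3 : m*(2*(m+7)*(m+6)^(m+6)) ≤ m*((m+7)^(m+7)) := Nat.mul_le_mul_left m h2
  set A := (m+6)^(m+6)
  set B := (m+7)^(m+7)
  set C := (m+8)^(m+8)
  nlinarith [h1, h2, h3, emid, Nat.zero_le (m*A), Nat.zero_le (m*m*A), Nat.zero_le A]

lemma fnr_two (n : ℕ) (hn : 2 ≤ n) :
    fnr n 2 = ∑ k ∈ Finset.Ico 1 n, k^k*(n-k)^(n-k) := by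
  rw [show (2:ℕ) = 1+1 from rfl, fnr_succ,
    Finset.sum_Ico_succ_top (show 1 ≤ n by omega)]
  rw [Nat.sub_self, fnr_of_lt (show 0 < 1 by omega), mul_zero, add_zero]
  apply Finset.sum_congr rfl
  intro k hk
  simp only [Finset.mem_Ico] at hk
  rw [fnr_one _ (by omega)]

/-- For all `n ≥ r ≥ 2`, `f(n, r) < 6 (n-1)^{n-1}`. -/
theorem fnr_lt (n r : ℕ) (hr : 2 ≤ r) (hn : r ≤ n) :
    fnr n r < 6 * (n - 1) ^ (n - 1) := by
  induction r, hr using Nat.le_induction generalizing n with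
  | base =>
    have hpos : 0 < (n-1)^(n-1) := pow_pos (by omega) _
    have := Tb n hn
    rw [fnr_two n hn]
    omega
  | succ r hr ih =>
    obtain ⟨m, rfl⟩ : ∃ m, n = m + 3 := ⟨n - 3, by omega⟩
    rw [fnr_succ]
    rw [← Finset.sum_Ico_consecutive (fun k => k^k * fnr (m+3-k) r)
      (show 1 ≤ m+2 by omega) (show m+2 ≤ m+3+1 by omega)]
    have e2 : (∑ k ∈ Finset.Ico (m+2) (m+3+1), k^k * fnr (m+3-k) r) = 0 := by
      rw [show m+3+1 = (m+3)+1 from rfl, Finset.sum_Ico_succ_top (by omega),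
        show m+3 = (m+2)+1 from rfl, Finset.sum_Ico_succ_top (by omega),
        Finset.Ico_self, Finset.sum_empty]
      rw [show m+2+1-(m+2) = 1 by omega, show m+2+1-(m+2+1) = 0 by omega]
      rw [fnr_of_lt (show 1 < r by omega), fnr_of_lt (show 0 < r by omega)]
      ring
    rw [e2, add_zero]
    have hstep : (∑ k ∈ Finset.Ico 1 (m+2), k^k * fnr (m+3-k) r)
        ≤ 6 * ∑ k ∈ Finset.Ico 1 (m+2), k^k*((m+2)-k)^((m+2)-k) := by
      rw [Finset.mul_sum]
      apply Finset.sum_le_sum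
      intro k hk
      simp only [Finset.mem_Ico] at hk
      have hp2 : 2 ≤ m+3-k := by omega
      rcases le_or_gt r (m+3-k) with hle | hlt
      · have := ih (m+3-k) hle
        rw [show m+3-k-1 = m+2-k by omega] at this
        calc k^k * fnr (m+3-k) r ≤ k^k * (6*(m+2-k)^(m+2-k)) :=
              Nat.mul_le_mul_left _ (le_of_lt this)
        _ = 6 * (k^k*(m+2-k)^(m+2-k)) := by ring
      · rw [fnr_of_lt hlt]
        simp
    have hT := Tb (m+2) (by omega)
    rw [show m+2-1 = m+1 by omega] at hT
    have hA : 2*(m+2)*(m+1)^(m+1) ≤ (m+2)^(m+2) := lemA (by omega)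
    have hpos : 0 < (m+1)^(m+1) := pow_pos (by omega) _
    rw [show m+3-1 = m+2 by omega]
    calc (∑ k ∈ Finset.Ico 1 (m+2), k^k * fnr (m+3-k) r)
        ≤ 6 * ∑ k ∈ Finset.Ico 1 (m+2), k^k*((m+2)-k)^((m+2)-k) := hstep
    _ ≤ 6 * (3*(m+1)^(m+1)) := Nat.mul_le_mul_left _ hT
    _ < 6 * (m+2)^(m+2) := by nlinarith [hA, hpos]
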